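/- For any differentiable function f on [0,1] with f' square-integrable, the inequality ∫₀¹|f'(x)|²dx ≥ ∫₀¹|f(x)|²dx − |∫₀¹ f(x)dx|² holds. -/

import Mathlib

open MeasureTheory intervalIntegral

/-- Poincaré-type inequality with constant 1 after subtracting the mean:
for `f : [0,1] → ℂ` differentiable with square-integrable derivative,
`∫₀¹ |f'|² ≥ ∫₀¹ |f|² - |∫₀¹ f|²`. -/
theorem stmt_0 (f f' : ℝ → ℂ)
    (hderiv : ∀ x ∈ Set.Icc (0:ℝ) 1, HasDerivAt f (f' x) x)
    (hf'L2 : IntervalIntegrable (fun x => ‖f' x‖^2) volume 0 1)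
    (hfL2 : IntervalIntegrable (fun x => ‖f x‖^2) volume 0 1)
    (hfInt : IntervalIntegrable f volume 0 1) :
    (∫ x in (0:ℝ)..1, ‖f' x‖^2) ≥
      (∫ x in (0:ℝ)..1, ‖f x‖^2) - ‖∫ x in (0:ℝ)..1, f x‖^2 := by
  have h01 : (0:ℝ) ≤ 1 := by norm_num
  have huIoc : Set.uIoc (0:ℝ) 1 = Set.Ioc 0 1 := Set.uIoc_of_le h01
  -- f' is a.e. strongly measurable on (0,1]
  have hne : ∀ᵐ x : ℝ ∂volume, x ≠ 1 := by
    rw [ae_iff]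
    have : {x : ℝ | ¬ x ≠ 1} = {1} := by ext x; simp
    rw [this]
    exact Real.volume_singleton
  have hmeas : AEStronglyMeasurable f' (volume.restrict (Set.uIoc (0:ℝ) 1)) := by
    rw [huIoc]
    have heq : ∀ᵐ x ∂(volume.restrict (Set.Ioc (0:ℝ) 1)), deriv f x = f' x := by
      filter_upwards [ae_restrict_mem measurableSet_Ioc, ae_restrict_of_ae hne] with x hx hx1
      exact (hderiv x ⟨hx.1.le, hx.2⟩).deriv
    exact ((measurable_deriv f).aestronglyMeasurable.restrict).congr heq
  -- f' is interval integrable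
  have hf'Int : IntervalIntegrable f' volume 0 1 := by
    refine (hf'L2.add (_root_.intervalIntegrable_const (c := (1:ℝ)))).mono_fun hmeas ?_
    refine Filter.Eventually.of_forall fun x => ?_
    show ‖f' x‖ ≤ ‖(‖f' x‖^2 + 1 : ℝ)‖
    have h0 : (0:ℝ) ≤ ‖f' x‖ := norm_nonneg _
    rw [Real.norm_eq_abs, abs_of_nonneg (by positivity)]
    nlinarith
  have hnormInt : IntervalIntegrable (fun x => ‖f' x‖) volume 0 1 := hf'Int.norm
  set M := ∫ x in (0:ℝ)..1, ‖f' x‖ with hM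
  have hMnonneg : 0 ≤ M := integral_nonneg h01 fun x _ => norm_nonneg _
  -- Cauchy–Schwarz with the constant function: M² ≤ ∫ ‖f'‖²
  have hM2K : M^2 ≤ ∫ x in (0:ℝ)..1, ‖f' x‖^2 := by
    have h0 : 0 ≤ ∫ x in (0:ℝ)..1, (‖f' x‖ - M)^2 :=
      integral_nonneg h01 fun x _ => sq_nonneg _
    have hfun : (fun x => (‖f' x‖ - M)^2)
        = fun x => (‖f' x‖^2 - (2*M) * ‖f' x‖) + M^2 := funext fun x => by ring
    rw [hfun, integral_add (hf'L2.sub (hnormInt.const_mul _)) _root_.intervalIntegrable_const,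
      integral_sub hf'L2 (hnormInt.const_mul _), intervalIntegral.integral_const_mul, intervalIntegral.integral_const] at h0
    simp only [smul_eq_mul, sub_zero, one_mul] at h0
    nlinarith [h0]
  -- pointwise bound on differences
  have hdiff : ∀ x ∈ Set.Icc (0:ℝ) 1, ∀ y ∈ Set.Icc (0:ℝ) 1, ‖f x - f y‖ ≤ M := by
    intro x hx y hy
    have hsub : Set.uIcc y x ⊆ Set.Icc (0:ℝ) 1 := Set.uIcc_subset_Icc hy hx
    have hsub' : Set.uIoc y x ⊆ Set.uIoc 0 1 := by
      rw [huIoc, Set.uIoc]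
      exact Set.Ioc_subset_Ioc (le_min hy.1 hx.1) (max_le hy.2 hx.2)
    have hint : IntervalIntegrable f' volume y x := hf'Int.mono_set' hsub'
    have hftc : ∫ t in y..x, f' t = f x - f y :=
      integral_eq_sub_of_hasDerivAt (fun t ht => hderiv t (hsub ht)) hint
    rw [← hftc]
    calc ‖∫ t in y..x, f' t‖ ≤ |∫ t in y..x, ‖f' t‖| := norm_integral_le_abs_integral_norm
      _ ≤ |∫ t in (0:ℝ)..1, ‖f' t‖| :=
          abs_integral_mono_interval hsub' (Filter.Eventually.of_forall fun t => norm_nonneg _) hnormInt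
      _ = M := abs_of_nonneg hMnonneg
  set c := ∫ x in (0:ℝ)..1, f x with hc
  -- pointwise bound on f - mean
  have hcb : ∀ x ∈ Set.Icc (0:ℝ) 1, ‖f x - c‖ ≤ M := by
    intro x hx
    have h1 : f x - c = ∫ y in (0:ℝ)..1, (f x - f y) := by
      rw [integral_sub _root_.intervalIntegrable_const hfInt, intervalIntegral.integral_const]
      simp [hc]
    rw [h1]
    have := norm_integral_le_of_norm_le_const (a := (0:ℝ)) (b := 1) (C := M)
      (f := fun y => f x - f y) (fun y hy => by
        rw [huIoc] at hy
        exact hdiff x hx y ⟨hy.1.le, hy.2⟩)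
    simpa using this
  -- expansion of ∫ ‖f - c‖²
  have hnormsq : ∀ z : ℂ, ‖z‖^2 = z.re^2 + z.im^2 := fun z => by
    rw [Complex.sq_norm, Complex.normSq_apply]; ring
  have hu : IntervalIntegrable (fun x => (f x).re) volume 0 1 := by
    rw [intervalIntegrable_iff] at hfInt ⊢
    exact Complex.reCLM.integrable_comp hfInt
  have hv : IntervalIntegrable (fun x => (f x).im) volume 0 1 := by
    rw [intervalIntegrable_iff] at hfInt ⊢
    exact Complex.imCLM.integrable_comp hfInt
  have ha : ∫ x in (0:ℝ)..1, (f x).re = c.re := by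
    rw [hc, intervalIntegral.integral_of_le h01, intervalIntegral.integral_of_le h01]
    simpa using integral_re (𝕜 := ℂ) hfInt.1
  have hb : ∫ x in (0:ℝ)..1, (f x).im = c.im := by
    rw [hc, intervalIntegral.integral_of_le h01, intervalIntegral.integral_of_le h01]
    simpa using integral_im (𝕜 := ℂ) hfInt.1
  have hfun2 : (fun x => ‖f x - c‖^2)
      = fun x => (‖f x‖^2 - (2*c.re*(f x).re + 2*c.im*(f x).im)) + (c.re^2 + c.im^2) := by
    funext x
    rw [hnormsq (f x - c), hnormsq (f x), Complex.sub_re, Complex.sub_im]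
    ring
  have hintmix : IntervalIntegrable
      (fun x => 2*c.re*(f x).re + 2*c.im*(f x).im) volume 0 1 :=
    (hu.const_mul _).add (hv.const_mul _)
  have hint2 : IntervalIntegrable (fun x => ‖f x - c‖^2) volume 0 1 := by
    rw [hfun2]
    exact (hfL2.sub hintmix).add _root_.intervalIntegrable_const
  have hexp2 : ∫ x in (0:ℝ)..1, ‖f x - c‖^2 = (∫ x in (0:ℝ)..1, ‖f x‖^2) - ‖c‖^2 := by
    rw [hfun2, integral_add (hfL2.sub hintmix) _root_.intervalIntegrable_const,
      integral_sub hfL2 hintmix,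
      integral_add (hu.const_mul _) (hv.const_mul _),
      intervalIntegral.integral_const_mul, intervalIntegral.integral_const_mul, intervalIntegral.integral_const, ha, hb, hnormsq c]
    simp only [smul_eq_mul, sub_zero, one_mul]
    ring
  -- put everything together
  have hfinal : ∫ x in (0:ℝ)..1, ‖f x - c‖^2 ≤ M^2 := by
    have := integral_mono_on h01 hint2 (_root_.intervalIntegrable_const (c := M^2))
      (fun x hx => pow_le_pow_left₀ (norm_nonneg _) (hcb x hx) 2)
    simpa using this
  rw [ge_iff_le]
  linarith [hexp2 ▸ hfinal]
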